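/- Let p : ℕ → (0,1) be any function such that N^{−1} = o(p(N)) and p(N) = o(N^{−1/2}). For each N let A be a random subset of I_N in the binomial model with parameter p(N), and let S := |A + A| and D := |A − A|. Then S ∼ (N·p(N))²/2 and D ∼ (N·p(N))²; in particular D ∼ 2S. -/

import Mathlib

open Finset Filter Asymptotics Pointwise

open Classical in
/-- Probability, under the binomial model on subsets of `I_N = {0, …, N}` with
parameter `p`, of the event `E`. -/
noncomputable def binomialProb (N : ℕ) (p : ℝ) (E : Finset ℕ → Prop) : ℝ :=
  ∑ A ∈ (Finset.range (N + 1)).powerset,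
    if E A then p ^ A.card * (1 - p) ^ (N + 1 - A.card) else 0

/-- `Y ∼ f(N)` in the sense of Hegarty–Miller: for all `ε₁, ε₂ > 0` the probability
that `Y` lies outside `[(1−ε₁)f(N), (1+ε₁)f(N)]` is eventually less than `ε₂`. -/
def BinomialTilde (p : ℕ → ℝ) (Y : ℕ → Finset ℕ → ℝ) (f : ℕ → ℝ) : Prop :=
  ∀ ε₁ ε₂ : ℝ, 0 < ε₁ → 0 < ε₂ → ∃ N₀ : ℕ, ∀ N : ℕ, N₀ < N →
    binomialProb N (p N)
      (fun A => ¬ ((1 - ε₁) * f N ≤ Y N A ∧ Y N A ≤ (1 + ε₁) * f N)) < ε₂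

section HMaux

variable {α β : Type*} [DecidableEq α] [DecidableEq β]

/-- weight -/
noncomputable def wt (s : Finset ℕ) (p : ℝ) (A : Finset ℕ) : ℝ :=
  p ^ A.card * (1 - p) ^ (s.card - A.card)

noncomputable def Exp (s : Finset ℕ) (p : ℝ) (X : Finset ℕ → ℝ) : ℝ :=
  ∑ A ∈ s.powerset, wt s p A * X A

lemma wt_nonneg {s : Finset ℕ} {p : ℝ} (hp0 : 0 ≤ p) (hp1 : p ≤ 1) (A : Finset ℕ) :
    0 ≤ wt s p A := by
  apply mul_nonneg (pow_nonneg hp0 _) (pow_nonneg (by linarith) _)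

open Classical in
lemma exp_indicator_subset {s B : Finset ℕ} (p : ℝ) (hB : B ⊆ s) :
    Exp s p (fun A => if B ⊆ A then 1 else 0) = p ^ B.card := by
  classical
  have key : ∀ A ∈ s.powerset, wt s p A * (if B ⊆ A then 1 else 0)
      = (∏ i ∈ A, p) * ∏ i ∈ s \ A, (if i ∈ B then 0 else 1 - p) := by
    intro A hA
    rw [mem_powerset] at hA
    by_cases h : B ⊆ A
    · have : ∀ i ∈ s \ A, (if i ∈ B then (0:ℝ) else 1 - p) = 1 - p := by
        intro i hi
        rw [Finset.mem_sdiff] at hi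
        have : i ∉ B := fun hiB => hi.2 (h hiB)
        simp [this]
      rw [Finset.prod_congr rfl this, if_pos h, prod_const, prod_const,
        card_sdiff_of_subset hA, wt, mul_one]
    · obtain ⟨i, hiB, hiA⟩ := Finset.not_subset.mp h
      have hi : i ∈ s \ A := mem_sdiff.mpr ⟨hB hiB, hiA⟩
      rw [if_neg h, mul_zero]
      rw [Finset.prod_eq_zero hi (by simp [hiB])]
      ring
  rw [Exp, Finset.sum_congr rfl key, ← Finset.prod_add]
  have : ∀ i ∈ s, (p + if i ∈ B then (0:ℝ) else 1 - p) = if i ∈ B then p else 1 := by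
    intro i _
    by_cases h : i ∈ B <;> simp [h]
  rw [Finset.prod_congr rfl this, ← Finset.prod_filter,
    Finset.filter_mem_eq_inter, Finset.inter_eq_right.mpr hB, Finset.prod_const]


lemma exp_total {s : Finset ℕ} {p : ℝ} : Exp s p (fun _ => 1) = 1 := by
  have := exp_indicator_subset (s := s) (B := ∅) p (Finset.empty_subset s)
  simpa using this

lemma exp_sum {s : Finset ℕ} {p : ℝ} {ι : Type*} (t : Finset ι) (X : ι → Finset ℕ → ℝ) :
    Exp s p (fun A => ∑ i ∈ t, X i A) = ∑ i ∈ t, Exp s p (X i) := by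
  unfold Exp
  rw [Finset.sum_comm]
  exact Finset.sum_congr rfl fun A _ => by rw [Finset.mul_sum]

lemma exp_mono {s : Finset ℕ} {p : ℝ} (hp0 : 0 ≤ p) (hp1 : p ≤ 1)
    {X Y : Finset ℕ → ℝ} (h : ∀ A ∈ s.powerset, X A ≤ Y A) :
    Exp s p X ≤ Exp s p Y :=
  Finset.sum_le_sum fun A hA => mul_le_mul_of_nonneg_left (h A hA) (wt_nonneg hp0 hp1 A)


lemma exp_congr {s : Finset ℕ} {p : ℝ} {X Y : Finset ℕ → ℝ}
    (h : ∀ A ∈ s.powerset, X A = Y A) : Exp s p X = Exp s p Y :=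
  Finset.sum_congr rfl fun A hA => by rw [h A hA]

lemma exp_add {s : Finset ℕ} {p : ℝ} (X Y : Finset ℕ → ℝ) :
    Exp s p (fun A => X A + Y A) = Exp s p X + Exp s p Y := by
  unfold Exp; rw [← Finset.sum_add_distrib]
  exact Finset.sum_congr rfl fun A _ => by ring

lemma exp_const_mul {s : Finset ℕ} {p : ℝ} (c : ℝ) (X : Finset ℕ → ℝ) :
    Exp s p (fun A => c * X A) = c * Exp s p X := by
  unfold Exp; rw [Finset.mul_sum]
  exact Finset.sum_congr rfl fun A _ => by ring

open Classical in
lemma exp_markov {s : Finset ℕ} {p : ℝ} (hp0 : 0 ≤ p) (hp1 : p ≤ 1)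
    (X : Finset ℕ → ℝ) (hX : ∀ A ∈ s.powerset, 0 ≤ X A) {t : ℝ} (ht : 0 < t)
    (E : Finset ℕ → Prop) (hE : ∀ A ∈ s.powerset, E A → t ≤ X A) :
    Exp s p (fun A => if E A then 1 else 0) ≤ Exp s p X / t := by
  rw [le_div_iff₀ ht, mul_comm, ← exp_const_mul]
  apply exp_mono hp0 hp1
  intro A hA
  by_cases h : E A
  · simpa [h, mul_comm] using hE A hA h
  · simpa [h] using hX A hA

open Classical in
lemma binomialProb_eq_exp (N : ℕ) (p : ℝ) (E : Finset ℕ → Prop) :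
    binomialProb N p E = Exp (range (N+1)) p (fun A => if E A then 1 else 0) := by
  unfold binomialProb Exp wt
  rw [card_range]
  refine Finset.sum_congr rfl fun A _ => ?_
  rw [mul_ite, mul_one, mul_zero]

open Classical in
lemma binomialProb_mono {N : ℕ} {p : ℝ} (hp0 : 0 ≤ p) (hp1 : p ≤ 1)
    {E F : Finset ℕ → Prop} (h : ∀ A ∈ (range (N+1)).powerset, E A → F A) :
    binomialProb N p E ≤ binomialProb N p F := by
  rw [binomialProb_eq_exp, binomialProb_eq_exp]
  apply exp_mono hp0 hp1
  intro A hA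
  by_cases hEA : E A
  · simp [hEA, h A hA hEA]
  · simp [hEA]; positivity

open Classical in
lemma binomialProb_union {N : ℕ} {p : ℝ} (hp0 : 0 ≤ p) (hp1 : p ≤ 1)
    (E F : Finset ℕ → Prop) :
    binomialProb N p (fun A => E A ∨ F A) ≤ binomialProb N p E + binomialProb N p F := by
  rw [binomialProb_eq_exp, binomialProb_eq_exp, binomialProb_eq_exp, ← exp_add]
  apply exp_mono hp0 hp1
  intro A _
  by_cases hE : E A <;> by_cases hF : F A <;> simp [hE, hF]

open Classical in
lemma exp_card {s : Finset ℕ} {p : ℝ} :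
    Exp s p (fun A => (A.card : ℝ)) = s.card * p := by
  have h1 : ∀ A ∈ s.powerset, (A.card : ℝ) = ∑ i ∈ s, (if i ∈ A then (1:ℝ) else 0) := by
    intro A hA
    rw [mem_powerset] at hA
    rw [Finset.sum_boole, Finset.filter_mem_eq_inter, Finset.inter_eq_right.mpr hA]
  rw [exp_congr h1, exp_sum]
  have h2 : ∀ i ∈ s, Exp s p (fun A => if i ∈ A then (1:ℝ) else 0) = p := by
    intro i hi
    have := exp_indicator_subset (s := s) (B := {i}) p (by simpa using hi)
    simpa using this
  rw [Finset.sum_congr rfl h2, Finset.sum_const, nsmul_eq_mul]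

open Classical in
lemma exp_card_sq {s : Finset ℕ} {p : ℝ} :
    Exp s p (fun A => (A.card : ℝ)^2)
      = s.card * p + s.card * (s.card - 1) * p^2 := by
  have h1 : ∀ A ∈ s.powerset, ((A.card : ℝ))^2
      = ∑ i ∈ s, ∑ j ∈ s, (if {i, j} ⊆ A then (1:ℝ) else 0) := by
    intro A hA
    rw [mem_powerset] at hA
    have : ∀ i ∈ s, ∀ j ∈ s, (if {i, j} ⊆ A then (1:ℝ) else 0)
        = (if i ∈ A then (1:ℝ) else 0) * (if j ∈ A then (1:ℝ) else 0) := by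
      intro i _ j _
      by_cases hi : i ∈ A <;> by_cases hj : j ∈ A <;>
        simp [Finset.insert_subset_iff, hi, hj]
    rw [Finset.sum_congr rfl fun i hi => Finset.sum_congr rfl fun j hj => this i hi j hj]
    rw [← Finset.sum_mul_sum]
    have hc : (∑ i ∈ s, if i ∈ A then (1:ℝ) else 0) = (A.card : ℝ) := by
      rw [Finset.sum_boole, Finset.filter_mem_eq_inter, Finset.inter_eq_right.mpr hA]
    rw [hc]; ring
  rw [exp_congr h1, exp_sum]
  have h2 : ∀ i ∈ s, Exp s p (fun A => ∑ j ∈ s, (if {i, j} ⊆ A then (1:ℝ) else 0))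
      = s.card * p^2 + (p - p^2) := by
    intro i hi
    rw [exp_sum]
    have h3 : ∀ j ∈ s, Exp s p (fun A => if {i, j} ⊆ A then (1:ℝ) else 0)
        = if j = i then p else p^2 := by
      intro j hj
      have hsub : ({i, j} : Finset ℕ) ⊆ s := by
        intro x hx; rcases Finset.mem_insert.mp hx with h | h
        · exact h ▸ hi
        · exact (Finset.mem_singleton.mp h) ▸ hj
      rw [exp_indicator_subset p hsub]
      by_cases h : j = i
      · subst h; simp
      · rw [if_neg h]
        rw [Finset.card_insert_of_notMem (by simp [Ne.symm h]), Finset.card_singleton]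
    rw [Finset.sum_congr rfl h3]
    have : ∀ j ∈ s, (if j = i then p else p^2) = p^2 + (if j = i then p - p^2 else 0) := by
      intro j _; by_cases h : j = i <;> simp [h]
    rw [Finset.sum_congr rfl this, Finset.sum_add_distrib, Finset.sum_const,
      Finset.sum_ite_eq' s i (fun _ => p - p^2), if_pos hi, nsmul_eq_mul]
  rw [Finset.sum_congr rfl h2, Finset.sum_const, nsmul_eq_mul]
  ring

open Classical in
lemma exp_var {s : Finset ℕ} {p : ℝ} :
    Exp s p (fun A => ((A.card : ℝ) - s.card * p)^2) = s.card * p * (1 - p) := by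
  have h1 : ∀ A ∈ s.powerset, ((A.card : ℝ) - s.card * p)^2
      = (A.card : ℝ)^2 + ((-(2 * (s.card * p))) * (A.card : ℝ) + (s.card * p)^2 * 1) := by
    intro A _; ring
  rw [exp_congr h1, exp_add, exp_add, exp_const_mul, exp_const_mul, exp_card,
    exp_card_sq, exp_total]
  ring

open Classical in
lemma prob_card_dev {N : ℕ} {p : ℝ} (hp0 : 0 < p) (hp1 : p < 1) {t : ℝ} (ht : 0 < t) :
    binomialProb N p (fun A => t ≤ |(A.card : ℝ) - (N + 1) * p|)
      ≤ (N + 1) * p / t^2 := by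
  rw [binomialProb_eq_exp]
  have h := exp_markov (s := range (N+1)) (p := p) hp0.le hp1.le
    (fun A => ((A.card : ℝ) - (N + 1) * p)^2)
    (fun A _ => sq_nonneg _) (t := t^2) (by positivity)
    (fun A => t ≤ |(A.card : ℝ) - (N + 1) * p|)
    (fun A _ hA => by
      calc t^2 ≤ |(A.card : ℝ) - (N + 1) * p|^2 := by
            apply pow_le_pow_left₀ ht.le hA
        _ = ((A.card : ℝ) - (N + 1) * p)^2 := sq_abs _
      )
  refine h.trans ?_
  have hv : Exp (range (N+1)) p (fun A => ((A.card : ℝ) - (N + 1) * p)^2)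
      = (N + 1) * p * (1 - p) := by
    have := exp_var (s := range (N+1)) (p := p)
    rw [card_range] at this
    push_cast at this ⊢; rw [this]
  rw [hv]
  gcongr ?_ / t^2
  nlinarith [mul_nonneg (mul_nonneg (by positivity : (0:ℝ) ≤ (N:ℝ)+1) hp0.le) hp0.le]

lemma card_le_image_add_collisions (s : Finset α) (f : α → β) :
    s.card ≤ (s.image f).card
      + ((s ×ˢ s).filter fun q => q.1 ≠ q.2 ∧ f q.1 = f q.2).card := by
  classical
  have h1 : s.card = ∑ b ∈ s.image f, (s.filter fun x => f x = b).card :=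
    Finset.card_eq_sum_card_fiberwise (fun x hx => mem_image_of_mem f hx)
  have h2 : ((s ×ˢ s).filter fun q => q.1 ≠ q.2 ∧ f q.1 = f q.2).card
      = ∑ b ∈ s.image f,
        ((s.filter fun x => f x = b).card * (s.filter fun x => f x = b).card
          - (s.filter fun x => f x = b).card) := by
    rw [Finset.card_eq_sum_card_fiberwise
      (f := fun q => f q.1) (t := s.image f)
      (fun q hq => mem_image_of_mem f (mem_product.mp (mem_filter.mp hq).1).1)]
    refine Finset.sum_congr rfl fun b _ => ?_
    have : (((s ×ˢ s).filter fun q => q.1 ≠ q.2 ∧ f q.1 = f q.2).filter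
        fun q => f q.1 = b) = (s.filter fun x => f x = b).offDiag := by
      ext ⟨x, y⟩
      simp only [mem_filter, mem_product, Finset.mem_offDiag, ne_eq]
      constructor
      · rintro ⟨⟨⟨hx, hy⟩, hne, hfe⟩, hb⟩
        exact ⟨⟨hx, hb⟩, ⟨hy, hfe ▸ hb⟩, hne⟩
      · rintro ⟨⟨hx, hbx⟩, ⟨hy, hby⟩, hne⟩
        exact ⟨⟨⟨hx, hy⟩, hne, hbx.trans hby.symm⟩, hbx⟩
    rw [this, Finset.offDiag_card]
  rw [h1, h2]
  have h3 : (s.image f).card = ∑ _b ∈ s.image f, 1 := by simp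
  rw [h3, ← Finset.sum_add_distrib]
  apply Finset.sum_le_sum
  intro b hb
  obtain ⟨x, hx, hfx⟩ := Finset.mem_image.mp hb
  have hpos : 1 ≤ (s.filter fun x => f x = b).card :=
    Finset.card_pos.mpr ⟨x, mem_filter.mpr ⟨hx, hfx⟩⟩
  set n := (s.filter fun x => f x = b).card
  have : 2 * n ≤ n * n + 1 := by nlinarith
  omega

lemma pair_counts (A : Finset α) [LinearOrder α] :
    2 * ((A ×ˢ A).filter fun q : α × α => q.1 ≤ q.2).card = A.card * A.card + A.card
    ∧ 2 * ((A ×ˢ A).filter fun q : α × α => q.2 < q.1).card + A.card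
        = A.card * A.card := by
  classical
  have htot : ((A ×ˢ A).filter fun q : α × α => q.1 ≤ q.2).card
      + ((A ×ˢ A).filter fun q : α × α => q.2 < q.1).card = A.card * A.card := by
    have := Finset.card_filter_add_card_filter_not
      (s := A ×ˢ A) (p := fun q : α × α => q.1 ≤ q.2)
    simp only [not_le] at this
    rw [this, card_product]
  have hswap : ((A ×ˢ A).filter fun q : α × α => q.2 < q.1).card
      = ((A ×ˢ A).filter fun q : α × α => q.1 < q.2).card := by
    apply Finset.card_bij' (fun q _ => (q.2, q.1)) (fun q _ => (q.2, q.1))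
    all_goals rintro ⟨x, y⟩ hq
    all_goals simp only [mem_filter, mem_product] at hq ⊢
    all_goals first
      | tauto
      | rfl
  have hsplit : ((A ×ˢ A).filter fun q : α × α => q.1 ≤ q.2).card
      = ((A ×ˢ A).filter fun q : α × α => q.1 < q.2).card
        + ((A ×ˢ A).filter fun q : α × α => q.1 = q.2).card := by
    rw [← Finset.card_union_of_disjoint, ← Finset.filter_or]
    · congr 1
      apply Finset.filter_congr
      intro q _
      simp [le_iff_lt_or_eq]
    · rw [Finset.disjoint_filter]
      intro q _ hlt heq
      exact absurd heq (ne_of_lt hlt)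
  have hdiag : ((A ×ˢ A).filter fun q : α × α => q.1 = q.2).card = A.card := by
    symm
    apply Finset.card_bij' (fun a _ => (a, a)) (fun q _ => q.1)
    · intro a ha
      exact mem_filter.mpr ⟨mem_product.mpr ⟨ha, ha⟩, rfl⟩
    · intro q hq
      simp only [mem_filter, mem_product] at hq
      exact hq.1.1
    · intro a _; rfl
    · rintro ⟨x, y⟩ hq
      simp only [mem_filter, mem_product] at hq
      simp [hq.2]
  omega

def colS (N : ℕ) : Finset ((ℕ × ℕ) × ℕ × ℕ) :=
  ((range (N+1) ×ˢ range (N+1)) ×ˢ (range (N+1) ×ˢ range (N+1))).filter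
    (fun q => q.1.1 ≤ q.1.2 ∧ q.2.1 ≤ q.2.2 ∧ q.1 ≠ q.2 ∧ q.1.1 + q.1.2 = q.2.1 + q.2.2)

def colD (N : ℕ) : Finset ((ℕ × ℕ) × ℕ × ℕ) :=
  ((range (N+1) ×ˢ range (N+1)) ×ˢ (range (N+1) ×ˢ range (N+1))).filter
    (fun q => q.1.2 < q.1.1 ∧ q.2.2 < q.2.1 ∧ q.1 ≠ q.2 ∧ q.1.1 + q.2.2 = q.2.1 + q.1.2)

def CS (N : ℕ) (A : Finset ℕ) : ℕ :=
  ((colS N).filter (fun q => q.1.1 ∈ A ∧ q.1.2 ∈ A ∧ q.2.1 ∈ A ∧ q.2.2 ∈ A)).card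

def CD (N : ℕ) (A : Finset ℕ) : ℕ :=
  ((colD N).filter (fun q => q.1.1 ∈ A ∧ q.1.2 ∈ A ∧ q.2.1 ∈ A ∧ q.2.2 ∈ A)).card

lemma sumset_eq_image (A : Finset ℕ) :
    A + A = ((A ×ˢ A).filter fun q : ℕ × ℕ => q.1 ≤ q.2).image (fun q => q.1 + q.2) := by
  ext x
  simp only [Finset.mem_add, mem_image, mem_filter, mem_product]
  constructor
  · rintro ⟨a, ha, b, hb, rfl⟩
    rcases le_total a b with h | h
    · exact ⟨(a, b), ⟨⟨ha, hb⟩, h⟩, rfl⟩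
    · exact ⟨(b, a), ⟨⟨hb, ha⟩, h⟩, by omega⟩
  · rintro ⟨⟨a, b⟩, ⟨⟨ha, hb⟩, _⟩, rfl⟩
    exact ⟨a, ha, b, hb, rfl⟩

lemma sumset_upper (A : Finset ℕ) :
    2 * (A + A).card ≤ A.card * A.card + A.card := by
  rw [sumset_eq_image]
  have h := Finset.card_image_le (s := (A ×ˢ A).filter fun q : ℕ × ℕ => q.1 ≤ q.2)
    (f := fun q : ℕ × ℕ => q.1 + q.2)
  have h2 := (pair_counts A).1
  omega

lemma sumset_lower {N : ℕ} {A : Finset ℕ} (hA : A ⊆ range (N+1)) :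
    A.card * A.card + A.card ≤ 2 * ((A + A).card + CS N A) := by
  classical
  set PS := (A ×ˢ A).filter (fun q : ℕ × ℕ => q.1 ≤ q.2) with hPS
  have key := card_le_image_add_collisions PS (fun q : ℕ × ℕ => q.1 + q.2)
  rw [← sumset_eq_image] at key
  have hcol : ((PS ×ˢ PS).filter fun q => q.1 ≠ q.2 ∧ q.1.1 + q.1.2 = q.2.1 + q.2.2)
      = (colS N).filter (fun q => q.1.1 ∈ A ∧ q.1.2 ∈ A ∧ q.2.1 ∈ A ∧ q.2.2 ∈ A) := by
    ext ⟨⟨a, b⟩, ⟨c, d⟩⟩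
    simp only [hPS, colS, mem_filter, mem_product, mem_range, ne_eq, Prod.mk.injEq, not_and]
    constructor
    · rintro ⟨⟨⟨⟨ha, hb⟩, hab⟩, ⟨⟨hc, hd⟩, hcd⟩⟩, hne, hsum⟩
      exact ⟨⟨⟨⟨mem_range.mp (hA ha), mem_range.mp (hA hb)⟩,
        mem_range.mp (hA hc), mem_range.mp (hA hd)⟩, hab, hcd, hne, hsum⟩, ha, hb, hc, hd⟩
    · rintro ⟨⟨_, hab, hcd, hne, hsum⟩, ha, hb, hc, hd⟩
      exact ⟨⟨⟨⟨ha, hb⟩, hab⟩, ⟨⟨hc, hd⟩, hcd⟩⟩, hne, hsum⟩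
  rw [hcol] at key
  have h2 := (pair_counts A).1
  rw [← hPS] at h2
  unfold CS
  omega

lemma neg_mem_diff {A : Finset ℕ} {x : ℤ}
    (hx : x ∈ (A.image fun m : ℕ => (m : ℤ)) - (A.image fun m : ℕ => (m : ℤ))) :
    -x ∈ (A.image fun m : ℕ => (m : ℤ)) - (A.image fun m : ℕ => (m : ℤ)) := by
  rw [Finset.mem_sub] at hx ⊢
  obtain ⟨b, hb, c, hc, h⟩ := hx
  exact ⟨c, hc, b, hb, by omega⟩

lemma diff_pos_eq_image (A : Finset ℕ) :
    (((A.image fun m : ℕ => (m : ℤ)) - (A.image fun m : ℕ => (m : ℤ))).filter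
        fun x : ℤ => 0 < x)
      = ((A ×ˢ A).filter fun q : ℕ × ℕ => q.2 < q.1).image
          (fun q : ℕ × ℕ => (q.1 : ℤ) - q.2) := by
  ext x
  simp only [mem_filter, Finset.mem_sub, Finset.mem_image, mem_product]
  constructor
  · rintro ⟨⟨b, hb, c, hc, rfl⟩, hpos⟩
    obtain ⟨a1, ha1, rfl⟩ := hb
    obtain ⟨a2, ha2, rfl⟩ := hc
    exact ⟨(a1, a2), ⟨⟨ha1, ha2⟩,
      (by exact_mod_cast sub_pos.mp hpos : a2 < a1)⟩, rfl⟩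
  · rintro ⟨⟨a, b⟩, hq, rfl⟩
    obtain ⟨⟨ha, hb⟩, hlt⟩ := hq
    refine ⟨⟨(a : ℤ), ⟨a, ha, rfl⟩, (b : ℤ), ⟨b, hb, rfl⟩, rfl⟩, ?_⟩
    have : (b : ℤ) < a := by exact_mod_cast hlt
    omega

lemma diffset_card {A : Finset ℕ} (hA : A.Nonempty) :
    ((A.image fun m : ℕ => (m : ℤ)) - (A.image fun m : ℕ => (m : ℤ))).card
      = 2 * (((A.image fun m : ℕ => (m : ℤ)) - (A.image fun m : ℕ => (m : ℤ))).filter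
          (fun x : ℤ => 0 < x)).card + 1 := by
  classical
  set T := (A.image fun m : ℕ => (m : ℤ)) - (A.image fun m : ℕ => (m : ℤ)) with hT
  have htot := Finset.card_filter_add_card_filter_not
    (s := T) (p := fun x : ℤ => 0 < x)
  have hsplit : (T.filter fun x : ℤ => ¬ 0 < x).card
      = (T.filter fun x : ℤ => x < 0).card + (T.filter fun x : ℤ => x = 0).card := by
    rw [← Finset.card_union_of_disjoint, ← Finset.filter_or]
    · congr 1
      apply Finset.filter_congr
      intro x _
      constructor
      · intro h; omega
      · intro h; omega
    · rw [Finset.disjoint_filter]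
      intro x _ h1 h2
      omega
  have hzero : (T.filter fun x : ℤ => x = 0).card = 1 := by
    obtain ⟨a, ha⟩ := hA
    have h0 : (0 : ℤ) ∈ T := by
      rw [hT, Finset.mem_sub]
      exact ⟨(a : ℤ), Finset.mem_image_of_mem _ ha, (a : ℤ),
        Finset.mem_image_of_mem _ ha, by ring⟩
    have : (T.filter fun x : ℤ => x = 0) = {0} := by
      ext x
      simp only [mem_filter, Finset.mem_singleton]
      constructor
      · rintro ⟨_, rfl⟩; rfl
      · rintro rfl; exact ⟨h0, rfl⟩
    rw [this, Finset.card_singleton]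
  have hneg : (T.filter fun x : ℤ => x < 0).card
      = (T.filter fun x : ℤ => 0 < x).card := by
    have himg : (T.filter fun x : ℤ => x < 0)
        = (T.filter fun x : ℤ => 0 < x).image (fun x => -x) := by
      ext x
      simp only [mem_filter, Finset.mem_image]
      constructor
      · rintro ⟨hxT, hx⟩
        exact ⟨-x, ⟨neg_mem_diff hxT, by omega⟩, by omega⟩
      · rintro ⟨y, ⟨hyT, hy⟩, rfl⟩
        exact ⟨neg_mem_diff hyT, by omega⟩
    rw [himg, Finset.card_image_of_injective _ neg_injective]
  omega

lemma diffset_upper (A : Finset ℕ) :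
    ((A.image fun m : ℕ => (m : ℤ)) - (A.image fun m : ℕ => (m : ℤ))).card + A.card
      ≤ A.card * A.card + 1 := by
  rcases A.eq_empty_or_nonempty with rfl | hne
  · simp
  · rw [diffset_card hne, diff_pos_eq_image]
    have h := Finset.card_image_le (s := (A ×ˢ A).filter fun q : ℕ × ℕ => q.2 < q.1)
      (f := fun q : ℕ × ℕ => (q.1 : ℤ) - q.2)
    have h2 := (pair_counts A).2
    omega

lemma diffset_lower {N : ℕ} {A : Finset ℕ} (hA : A ⊆ range (N+1)) (hne : A.Nonempty) :
    A.card * A.card + 1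
      ≤ ((A.image fun m : ℕ => (m : ℤ)) - (A.image fun m : ℕ => (m : ℤ))).card
        + A.card + 2 * CD N A := by
  classical
  set DP := (A ×ˢ A).filter (fun q : ℕ × ℕ => q.2 < q.1) with hDP
  have key := card_le_image_add_collisions DP (fun q : ℕ × ℕ => (q.1 : ℤ) - q.2)
  rw [← diff_pos_eq_image] at key
  have hcol : ((DP ×ˢ DP).filter fun q => q.1 ≠ q.2 ∧
        (q.1.1 : ℤ) - q.1.2 = (q.2.1 : ℤ) - q.2.2)
      = (colD N).filter (fun q => q.1.1 ∈ A ∧ q.1.2 ∈ A ∧ q.2.1 ∈ A ∧ q.2.2 ∈ A) := by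
    ext ⟨⟨a, b⟩, ⟨c, d⟩⟩
    simp only [hDP, colD, mem_filter, mem_product, mem_range, ne_eq]
    constructor
    · rintro ⟨⟨⟨⟨ha, hb⟩, hab⟩, ⟨⟨hc, hd⟩, hcd⟩⟩, hne', hsum⟩
      exact ⟨⟨⟨⟨mem_range.mp (hA ha), mem_range.mp (hA hb)⟩,
        mem_range.mp (hA hc), mem_range.mp (hA hd)⟩, hab, hcd, hne', by omega⟩,
        ha, hb, hc, hd⟩
    · rintro ⟨⟨_, hab, hcd, hne', hsum⟩, ha, hb, hc, hd⟩
      exact ⟨⟨⟨⟨ha, hb⟩, hab⟩, ⟨⟨hc, hd⟩, hcd⟩⟩, hne', by push_cast; omega⟩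
  rw [hcol] at key
  have h2 := (pair_counts A).2
  rw [← hDP] at h2
  have h3 := diffset_card hne
  unfold CD
  omega

lemma three_le_card_of_triple {s : Finset ℕ} {x y z : ℕ} (hxy : x ≠ y) (hxz : x ≠ z)
    (hyz : y ≠ z) (hx : x ∈ s) (hy : y ∈ s) (hz : z ∈ s) : 3 ≤ s.card := by
  have hsub : ({x, y, z} : Finset ℕ) ⊆ s := by
    intro w hw
    rcases Finset.mem_insert.mp hw with rfl | hw
    · exact hx
    rcases Finset.mem_insert.mp hw with rfl | hw
    · exact hy
    · exact (Finset.mem_singleton.mp hw) ▸ hz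
  calc 3 = ({x, y, z} : Finset ℕ).card :=
        (Finset.card_eq_three.mpr ⟨x, y, z, hxy, hxz, hyz, rfl⟩).symm
    _ ≤ s.card := Finset.card_le_card hsub

lemma four_le_card_of_quad {s : Finset ℕ} {a b c d : ℕ} (hab : a ≠ b) (hac : a ≠ c)
    (had : a ≠ d) (hbc : b ≠ c) (hbd : b ≠ d) (hcd : c ≠ d)
    (ha : a ∈ s) (hb : b ∈ s) (hc : c ∈ s) (hd : d ∈ s) : 4 ≤ s.card := by
  have hsub : ({a, b, c, d} : Finset ℕ) ⊆ s := by
    intro w hw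
    simp only [Finset.mem_insert, Finset.mem_singleton] at hw
    rcases hw with rfl | rfl | rfl | rfl <;> assumption
  have hcard : ({a, b, c, d} : Finset ℕ).card = 4 := by
    rw [Finset.card_insert_of_notMem (by simp [hab, hac, had]),
      Finset.card_insert_of_notMem (by simp [hbc, hbd]),
      Finset.card_insert_of_notMem (by simp [hcd]), Finset.card_singleton]
  calc 4 = ({a, b, c, d} : Finset ℕ).card := hcard.symm
    _ ≤ s.card := Finset.card_le_card hsub

lemma mem_colS {N : ℕ} {q : (ℕ × ℕ) × ℕ × ℕ} (hq : q ∈ colS N) :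
    q.1.1 < N+1 ∧ q.1.2 < N+1 ∧ q.2.1 < N+1 ∧ q.2.2 < N+1 ∧
    q.1.1 ≤ q.1.2 ∧ q.2.1 ≤ q.2.2 ∧ q.1 ≠ q.2 ∧ q.1.1 + q.1.2 = q.2.1 + q.2.2 := by
  simp only [colS, mem_filter, mem_product, mem_range] at hq
  tauto

lemma mem_colD {N : ℕ} {q : (ℕ × ℕ) × ℕ × ℕ} (hq : q ∈ colD N) :
    q.1.1 < N+1 ∧ q.1.2 < N+1 ∧ q.2.1 < N+1 ∧ q.2.2 < N+1 ∧
    q.1.2 < q.1.1 ∧ q.2.2 < q.2.1 ∧ q.1 ≠ q.2 ∧ q.1.1 + q.2.2 = q.2.1 + q.1.2 := by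
  simp only [colD, mem_filter, mem_product, mem_range] at hq
  tauto

lemma prod_ne_iff {a b c d : ℕ} : ((a, b) : ℕ × ℕ) ≠ (c, d) ↔ ¬(a = c ∧ b = d) := by
  simp [Prod.ext_iff]

lemma colS_qset_three {N : ℕ} {q : (ℕ × ℕ) × ℕ × ℕ} (hq : q ∈ colS N) :
    3 ≤ ({q.1.1, q.1.2, q.2.1, q.2.2} : Finset ℕ).card := by
  obtain ⟨⟨a, b⟩, c, d⟩ := q
  obtain ⟨_, _, _, _, hab, hcd, hne, hsum⟩ := mem_colS hq
  simp only [prod_ne_iff] at hne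
  simp only at hab hcd hsum ⊢
  have hac : a ≠ c := fun h => hne ⟨h, by omega⟩
  rcases Nat.lt_or_ge a c with h | h
  · exact three_le_card_of_triple (x := a) (y := c) (z := b) (by omega) (by omega) (by omega)
      (by simp) (by simp) (by simp)
  · have h' : c < a := by omega
    exact three_le_card_of_triple (x := c) (y := a) (z := d) (by omega) (by omega) (by omega)
      (by simp) (by simp) (by simp)

lemma colS_qset_four {N : ℕ} {q : (ℕ × ℕ) × ℕ × ℕ} (hq : q ∈ colS N)
    (hφ : ¬(q.1.1 = q.1.2 ∨ q.2.1 = q.2.2)) :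
    4 ≤ ({q.1.1, q.1.2, q.2.1, q.2.2} : Finset ℕ).card := by
  obtain ⟨⟨a, b⟩, c, d⟩ := q
  obtain ⟨_, _, _, _, hab, hcd, hne, hsum⟩ := mem_colS hq
  simp only [prod_ne_iff] at hne
  push_neg at hφ
  simp only at hab hcd hsum hφ ⊢
  obtain ⟨h1, h2⟩ := hφ
  have hac : a ≠ c := fun h => hne ⟨h, by omega⟩
  have hbd : b ≠ d := fun h => hne ⟨by omega, h⟩
  exact four_le_card_of_quad h1 hac (by omega) (by omega) hbd h2
    (by simp) (by simp) (by simp) (by simp)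

lemma colD_qset_three {N : ℕ} {q : (ℕ × ℕ) × ℕ × ℕ} (hq : q ∈ colD N) :
    3 ≤ ({q.1.1, q.1.2, q.2.1, q.2.2} : Finset ℕ).card := by
  obtain ⟨⟨a, b⟩, c, d⟩ := q
  obtain ⟨_, _, _, _, hab, hcd, hne, hsum⟩ := mem_colD hq
  simp only [prod_ne_iff] at hne
  simp only at hab hcd hsum ⊢
  have hac : a ≠ c := fun h => hne ⟨h, by omega⟩
  rcases Nat.lt_or_ge a c with h | h
  · exact three_le_card_of_triple (x := b) (y := a) (z := c) (by omega) (by omega) (by omega)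
      (by simp) (by simp) (by simp)
  · exact three_le_card_of_triple (x := d) (y := c) (z := a) (by omega) (by omega) (by omega)
      (by simp) (by simp) (by simp)

lemma colD_qset_four {N : ℕ} {q : (ℕ × ℕ) × ℕ × ℕ} (hq : q ∈ colD N)
    (hφ : ¬(q.1.1 = q.2.2 ∨ q.1.2 = q.2.1)) :
    4 ≤ ({q.1.1, q.1.2, q.2.1, q.2.2} : Finset ℕ).card := by
  obtain ⟨⟨a, b⟩, c, d⟩ := q
  obtain ⟨_, _, _, _, hab, hcd, hne, hsum⟩ := mem_colD hq
  simp only [prod_ne_iff] at hne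
  push_neg at hφ
  simp only at hab hcd hsum hφ ⊢
  obtain ⟨h1, h2⟩ := hφ
  have hac : a ≠ c := fun h => hne ⟨h, by omega⟩
  have hbd : b ≠ d := fun h => hne ⟨by omega, h⟩
  exact four_le_card_of_quad (by omega) hac h1 h2 hbd (by omega)
    (by simp) (by simp) (by simp) (by simp)

lemma card_le_of_inj_pair {Q : Finset ((ℕ × ℕ) × ℕ × ℕ)} {N : ℕ}
    (f : ((ℕ × ℕ) × ℕ × ℕ) → ℕ × ℕ)
    (hmap : ∀ q ∈ Q, f q ∈ range (N+1) ×ˢ range (N+1)) (hinj : Set.InjOn f Q) :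
    Q.card ≤ (N+1)^2 := by
  have h := Finset.card_le_card_of_injOn f hmap hinj
  calc Q.card ≤ (range (N+1) ×ˢ range (N+1)).card := h
    _ = (N+1)^2 := by simp [card_product, card_range, pow_two]

lemma card_le_of_inj_triple {Q : Finset ((ℕ × ℕ) × ℕ × ℕ)} {N : ℕ}
    (f : ((ℕ × ℕ) × ℕ × ℕ) → ℕ × ℕ × ℕ)
    (hmap : ∀ q ∈ Q, f q ∈ range (N+1) ×ˢ (range (N+1) ×ˢ range (N+1)))
    (hinj : Set.InjOn f Q) :
    Q.card ≤ (N+1)^3 := by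
  have h := Finset.card_le_card_of_injOn f hmap hinj
  calc Q.card ≤ (range (N+1) ×ˢ (range (N+1) ×ˢ range (N+1))).card := h
    _ = (N+1)^3 := by simp [card_product, card_range]; ring

lemma colS_card {N : ℕ} : (colS N).card ≤ (N+1)^3 := by
  apply card_le_of_inj_triple (fun q => (q.1.1, q.1.2, q.2.1))
  · intro q hq
    obtain ⟨h1, h2, h3, _, _⟩ := mem_colS hq
    simp only [mem_product, mem_range]
    exact ⟨h1, h2, h3⟩
  · rintro ⟨⟨a, b⟩, c, d⟩ hq ⟨⟨a', b'⟩, c', d'⟩ hq' heq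
    obtain ⟨_, _, _, _, _, _, _, hs⟩ := mem_colS (Finset.mem_coe.mp hq)
    obtain ⟨_, _, _, _, _, _, _, hs'⟩ := mem_colS (Finset.mem_coe.mp hq')
    simp only [Prod.mk.injEq] at heq ⊢
    simp only at hs hs'
    omega

lemma colS_phi_card {N : ℕ} :
    ((colS N).filter fun q => q.1.1 = q.1.2 ∨ q.2.1 = q.2.2).card ≤ 2*(N+1)^2 := by
  rw [Finset.filter_or]
  refine le_trans (Finset.card_union_le _ _) ?_
  have ha : ((colS N).filter fun q => q.1.1 = q.1.2).card ≤ (N+1)^2 := by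
    apply card_le_of_inj_pair (fun q => (q.1.1, q.2.1))
    · intro q hq
      obtain ⟨h1, _, h3, _⟩ := mem_colS (Finset.mem_filter.mp hq).1
      simp only [mem_product, mem_range]
      exact ⟨h1, h3⟩
    · rintro ⟨⟨a, b⟩, c, d⟩ hq ⟨⟨a', b'⟩, c', d'⟩ hq' heq
      obtain ⟨hm, he⟩ := Finset.mem_filter.mp (Finset.mem_coe.mp hq)
      obtain ⟨hm', he'⟩ := Finset.mem_filter.mp (Finset.mem_coe.mp hq')
      obtain ⟨_, _, _, _, _, _, _, hs⟩ := mem_colS hm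
      obtain ⟨_, _, _, _, _, _, _, hs'⟩ := mem_colS hm'
      simp only [Prod.mk.injEq] at heq ⊢
      simp only at hs hs' he he'
      omega
  have hb : ((colS N).filter fun q => q.2.1 = q.2.2).card ≤ (N+1)^2 := by
    apply card_le_of_inj_pair (fun q => (q.1.1, q.2.1))
    · intro q hq
      obtain ⟨h1, _, h3, _⟩ := mem_colS (Finset.mem_filter.mp hq).1
      simp only [mem_product, mem_range]
      exact ⟨h1, h3⟩
    · rintro ⟨⟨a, b⟩, c, d⟩ hq ⟨⟨a', b'⟩, c', d'⟩ hq' heq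
      obtain ⟨hm, he⟩ := Finset.mem_filter.mp (Finset.mem_coe.mp hq)
      obtain ⟨hm', he'⟩ := Finset.mem_filter.mp (Finset.mem_coe.mp hq')
      obtain ⟨_, _, _, _, _, _, _, hs⟩ := mem_colS hm
      obtain ⟨_, _, _, _, _, _, _, hs'⟩ := mem_colS hm'
      simp only [Prod.mk.injEq] at heq ⊢
      simp only at hs hs' he he'
      omega
  omega

lemma colD_card {N : ℕ} : (colD N).card ≤ (N+1)^3 := by
  apply card_le_of_inj_triple (fun q => (q.1.1, q.1.2, q.2.1))
  · intro q hq
    obtain ⟨h1, h2, h3, _, _⟩ := mem_colD hq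
    simp only [mem_product, mem_range]
    exact ⟨h1, h2, h3⟩
  · rintro ⟨⟨a, b⟩, c, d⟩ hq ⟨⟨a', b'⟩, c', d'⟩ hq' heq
    obtain ⟨_, _, _, _, _, _, _, hs⟩ := mem_colD (Finset.mem_coe.mp hq)
    obtain ⟨_, _, _, _, _, _, _, hs'⟩ := mem_colD (Finset.mem_coe.mp hq')
    simp only [Prod.mk.injEq] at heq ⊢
    simp only at hs hs'
    omega

lemma colD_phi_card {N : ℕ} :
    ((colD N).filter fun q => q.1.1 = q.2.2 ∨ q.1.2 = q.2.1).card ≤ 2*(N+1)^2 := by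
  rw [Finset.filter_or]
  refine le_trans (Finset.card_union_le _ _) ?_
  have ha : ((colD N).filter fun q => q.1.1 = q.2.2).card ≤ (N+1)^2 := by
    apply card_le_of_inj_pair (fun q => (q.1.1, q.1.2))
    · intro q hq
      obtain ⟨h1, h2, _⟩ := mem_colD (Finset.mem_filter.mp hq).1
      simp only [mem_product, mem_range]
      exact ⟨h1, h2⟩
    · rintro ⟨⟨a, b⟩, c, d⟩ hq ⟨⟨a', b'⟩, c', d'⟩ hq' heq
      obtain ⟨hm, he⟩ := Finset.mem_filter.mp (Finset.mem_coe.mp hq)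
      obtain ⟨hm', he'⟩ := Finset.mem_filter.mp (Finset.mem_coe.mp hq')
      obtain ⟨_, _, _, _, _, _, _, hs⟩ := mem_colD hm
      obtain ⟨_, _, _, _, _, _, _, hs'⟩ := mem_colD hm'
      simp only [Prod.mk.injEq] at heq ⊢
      simp only at hs hs' he he'
      omega
  have hb : ((colD N).filter fun q => q.1.2 = q.2.1).card ≤ (N+1)^2 := by
    apply card_le_of_inj_pair (fun q => (q.1.1, q.1.2))
    · intro q hq
      obtain ⟨h1, h2, _⟩ := mem_colD (Finset.mem_filter.mp hq).1
      simp only [mem_product, mem_range]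
      exact ⟨h1, h2⟩
    · rintro ⟨⟨a, b⟩, c, d⟩ hq ⟨⟨a', b'⟩, c', d'⟩ hq' heq
      obtain ⟨hm, he⟩ := Finset.mem_filter.mp (Finset.mem_coe.mp hq)
      obtain ⟨hm', he'⟩ := Finset.mem_filter.mp (Finset.mem_coe.mp hq')
      obtain ⟨_, _, _, _, _, _, _, hs⟩ := mem_colD hm
      obtain ⟨_, _, _, _, _, _, _, hs'⟩ := mem_colD hm'
      simp only [Prod.mk.injEq] at heq ⊢
      simp only at hs hs' he he'
      omega
  omega

open Classical in
lemma exp_quad_count {N : ℕ} {p : ℝ} (hp0 : 0 ≤ p) (hp1 : p ≤ 1)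
    (Q : Finset ((ℕ × ℕ) × ℕ × ℕ)) (φ : ((ℕ × ℕ) × ℕ × ℕ) → Prop) [DecidablePred φ]
    (hQsub : ∀ q ∈ Q, q.1.1 < N+1 ∧ q.1.2 < N+1 ∧ q.2.1 < N+1 ∧ q.2.2 < N+1)
    (h3 : ∀ q ∈ Q, 3 ≤ ({q.1.1, q.1.2, q.2.1, q.2.2} : Finset ℕ).card)
    (h4 : ∀ q ∈ Q, ¬ φ q → 4 ≤ ({q.1.1, q.1.2, q.2.1, q.2.2} : Finset ℕ).card)
    (hφ : (Q.filter φ).card ≤ 2*(N+1)^2) (hc : Q.card ≤ (N+1)^3) :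
    Exp (range (N+1)) p (fun A =>
      ((Q.filter (fun q => q.1.1 ∈ A ∧ q.1.2 ∈ A ∧ q.2.1 ∈ A ∧ q.2.2 ∈ A)).card : ℝ))
      ≤ 2*((N:ℝ)+1)^2 * p^3 + ((N:ℝ)+1)^3 * p^4 := by
  classical
  have hpt : ∀ A ∈ (range (N+1)).powerset,
      ((Q.filter (fun q => q.1.1 ∈ A ∧ q.1.2 ∈ A ∧ q.2.1 ∈ A ∧ q.2.2 ∈ A)).card : ℝ)
      = ∑ q ∈ Q, (if ({q.1.1, q.1.2, q.2.1, q.2.2} : Finset ℕ) ⊆ A then (1:ℝ) else 0) := by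
    intro A _
    rw [Finset.card_filter]
    push_cast
    refine Finset.sum_congr rfl fun q _ => ?_
    have hiff : ({q.1.1, q.1.2, q.2.1, q.2.2} : Finset ℕ) ⊆ A
        ↔ (q.1.1 ∈ A ∧ q.1.2 ∈ A ∧ q.2.1 ∈ A ∧ q.2.2 ∈ A) := by
      simp [Finset.insert_subset_iff]
    by_cases h : q.1.1 ∈ A ∧ q.1.2 ∈ A ∧ q.2.1 ∈ A ∧ q.2.2 ∈ A
    · simp [h, hiff]
    · simp [h, hiff]
  rw [exp_congr hpt, exp_sum]
  have hterm : ∀ q ∈ Q, Exp (range (N+1)) p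
      (fun A => if ({q.1.1, q.1.2, q.2.1, q.2.2} : Finset ℕ) ⊆ A then (1:ℝ) else 0)
      = p ^ ({q.1.1, q.1.2, q.2.1, q.2.2} : Finset ℕ).card := by
    intro q hq
    apply exp_indicator_subset
    intro x hx
    obtain ⟨h1, h2, h3', h4'⟩ := hQsub q hq
    simp only [Finset.mem_insert, Finset.mem_singleton] at hx
    rw [mem_range]
    rcases hx with rfl | rfl | rfl | rfl <;> omega
  rw [Finset.sum_congr rfl hterm, ← Finset.sum_filter_add_sum_filter_not Q φ]
  have part1 : ∑ q ∈ Q.filter φ, p ^ ({q.1.1, q.1.2, q.2.1, q.2.2} : Finset ℕ).card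
      ≤ 2*((N:ℝ)+1)^2 * p^3 := by
    calc ∑ q ∈ Q.filter φ, p ^ ({q.1.1, q.1.2, q.2.1, q.2.2} : Finset ℕ).card
        ≤ (Q.filter φ).card • p^3 :=
          Finset.sum_le_card_nsmul _ _ _ (fun q hq =>
            pow_le_pow_of_le_one hp0 hp1 (h3 q (mem_filter.mp hq).1))
      _ = ((Q.filter φ).card : ℝ) * p^3 := by rw [nsmul_eq_mul]
      _ ≤ 2*((N:ℝ)+1)^2 * p^3 := by
          apply mul_le_mul_of_nonneg_right _ (by positivity)
          calc ((Q.filter φ).card : ℝ) ≤ ((2*(N+1)^2 : ℕ) : ℝ) := Nat.cast_le.mpr hφ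
            _ = 2*((N:ℝ)+1)^2 := by push_cast; ring
  have part2 : ∑ q ∈ Q.filter (fun q => ¬ φ q),
        p ^ ({q.1.1, q.1.2, q.2.1, q.2.2} : Finset ℕ).card
      ≤ ((N:ℝ)+1)^3 * p^4 := by
    calc ∑ q ∈ Q.filter (fun q => ¬ φ q), p ^ ({q.1.1, q.1.2, q.2.1, q.2.2} : Finset ℕ).card
        ≤ (Q.filter (fun q => ¬ φ q)).card • p^4 :=
          Finset.sum_le_card_nsmul _ _ _ (fun q hq =>
            pow_le_pow_of_le_one hp0 hp1
              (h4 q (mem_filter.mp hq).1 (mem_filter.mp hq).2))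
      _ = ((Q.filter (fun q => ¬ φ q)).card : ℝ) * p^4 := by rw [nsmul_eq_mul]
      _ ≤ ((N:ℝ)+1)^3 * p^4 := by
          apply mul_le_mul_of_nonneg_right _ (by positivity)
          calc ((Q.filter (fun q => ¬ φ q)).card : ℝ)
              ≤ ((Q.card : ℕ) : ℝ) := Nat.cast_le.mpr (Finset.card_filter_le _ _)
            _ ≤ (((N+1)^3 : ℕ) : ℝ) := Nat.cast_le.mpr hc
            _ = ((N:ℝ)+1)^3 := by push_cast; ring
  linarith

open Classical in
lemma exp_CS {N : ℕ} {p : ℝ} (hp0 : 0 ≤ p) (hp1 : p ≤ 1) :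
    Exp (range (N+1)) p (fun A => (CS N A : ℝ))
      ≤ 2*((N:ℝ)+1)^2 * p^3 + ((N:ℝ)+1)^3 * p^4 := by
  have := exp_quad_count hp0 hp1 (colS N) (fun q => q.1.1 = q.1.2 ∨ q.2.1 = q.2.2)
    (fun q hq => by obtain ⟨h1, h2, h3, h4, _⟩ := mem_colS hq; exact ⟨h1, h2, h3, h4⟩)
    (fun q hq => colS_qset_three hq)
    (fun q hq hφ => colS_qset_four hq hφ)
    colS_phi_card colS_card
  exact this

open Classical in
lemma exp_CD {N : ℕ} {p : ℝ} (hp0 : 0 ≤ p) (hp1 : p ≤ 1) :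
    Exp (range (N+1)) p (fun A => (CD N A : ℝ))
      ≤ 2*((N:ℝ)+1)^2 * p^3 + ((N:ℝ)+1)^3 * p^4 := by
  have := exp_quad_count hp0 hp1 (colD N) (fun q => q.1.1 = q.2.2 ∨ q.1.2 = q.2.1)
    (fun q hq => by obtain ⟨h1, h2, h3, h4, _⟩ := mem_colD hq; exact ⟨h1, h2, h3, h4⟩)
    (fun q hq => colD_qset_three hq)
    (fun q hq hφ => colD_qset_four hq hφ)
    colD_phi_card colD_card
  exact this


lemma tendsto_Np (p : ℕ → ℝ) (hp : ∀ N, p N ∈ Set.Ioo (0 : ℝ) 1)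
    (hp1 : (fun N : ℕ => (N : ℝ)⁻¹) =o[atTop] fun N => p N) :
    Tendsto (fun N : ℕ => (N : ℝ) * p N) atTop atTop := by
  rw [tendsto_atTop]
  intro b
  set m := max b 1 with hm
  have hm1 : (1:ℝ) ≤ m := le_max_right _ _
  have hmpos : (0:ℝ) < m := by linarith
  have h := hp1.def (c := 1/m) (by positivity)
  filter_upwards [h, eventually_ge_atTop 1] with N hN hN1
  have hNpos : (0:ℝ) < N := by exact_mod_cast hN1
  have hpN := hp N
  rw [Real.norm_eq_abs, Real.norm_eq_abs, abs_of_pos (by positivity),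
    abs_of_pos hpN.1] at hN
  -- hN : (N:ℝ)⁻¹ ≤ 1/m * p N
  have : m ≤ (N:ℝ) * p N := by
    rw [inv_eq_one_div] at hN
    rw [div_le_iff₀ hNpos] at hN
    calc m = m * 1 := by ring
      _ ≤ m * ((1/m * p N) * N) := by
          apply mul_le_mul_of_nonneg_left hN hmpos.le
      _ = (N:ℝ) * p N := by field_simp
  linarith [le_max_left b 1]

lemma tendsto_p_zero (p : ℕ → ℝ)
    (hp2 : (fun N : ℕ => p N) =o[atTop] fun N : ℕ => (N : ℝ) ^ (-(1/2 : ℝ))) :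
    Tendsto p atTop (nhds 0) := by
  apply hp2.trans_tendsto
  have h1 : Tendsto (fun x : ℝ => x ^ (-(1/2 : ℝ))) atTop (nhds 0) :=
    tendsto_rpow_neg_atTop (by norm_num)
  exact h1.comp tendsto_natCast_atTop_atTop

lemma tendsto_Np2 (p : ℕ → ℝ) (hp : ∀ N, p N ∈ Set.Ioo (0 : ℝ) 1)
    (hp2 : (fun N : ℕ => p N) =o[atTop] fun N : ℕ => (N : ℝ) ^ (-(1/2 : ℝ))) :
    Tendsto (fun N : ℕ => (N : ℝ) * p N ^ 2) atTop (nhds 0) := by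
  rw [NormedAddCommGroup.tendsto_nhds_zero]
  intro ε hε
  set c := min 1 (ε/2) with hc
  have hcpos : 0 < c := by
    apply lt_min (by norm_num) (by positivity)
  have h := hp2.def (c := c) hcpos
  filter_upwards [h, eventually_ge_atTop 1] with N hN hN1
  have hNpos : (0:ℝ) < N := by exact_mod_cast hN1
  have hpN := hp N
  rw [Real.norm_eq_abs, Real.norm_eq_abs, abs_of_pos hpN.1,
    abs_of_pos (Real.rpow_pos_of_pos hNpos _)] at hN
  rw [Real.norm_eq_abs, abs_of_pos (mul_pos hNpos (pow_pos hpN.1 2))]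
  have hsq : p N ^ 2 ≤ c^2 * ((N:ℝ) ^ (-(1/2 : ℝ)))^2 := by
    rw [← mul_pow]
    apply pow_le_pow_left₀ hpN.1.le hN
  have hrw : ((N:ℝ) ^ (-(1/2 : ℝ)))^2 = ((N:ℝ))⁻¹ := by
    rw [← Real.rpow_natCast ((N:ℝ) ^ (-(1/2 : ℝ))) 2, ← Real.rpow_mul hNpos.le]
    norm_num
    exact Real.rpow_neg_one _
  rw [hrw] at hsq
  have : (N:ℝ) * p N ^ 2 ≤ c^2 := by
    calc (N:ℝ) * p N ^ 2 ≤ (N:ℝ) * (c^2 * ((N:ℝ))⁻¹) :=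
          mul_le_mul_of_nonneg_left hsq hNpos.le
      _ = c^2 := by field_simp
  have hc1 : c ≤ 1 := min_le_left _ _
  have hc2 : c ≤ ε/2 := min_le_right _ _
  nlinarith


set_option maxHeartbeats 1000000 in
lemma real_S_bounds {ε p r m S c : ℝ} (hε0 : 0 < ε) (hε1 : ε ≤ 1) (hp0 : 0 < p) (hp1 : p < 1)
    (hr : 20 ≤ ε * r) (hr0 : 0 < r) (hm0 : 0 ≤ m) (hS0 : 0 ≤ S)
    (hdev : |m - (r + p)| < (ε/20) * (r + p))
    (hc : c < (ε/20) * r^2) (hc0 : 0 ≤ c)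
    (hup : 2*S ≤ m^2 + m) (hlo : m^2 + m ≤ 2*(S + c)) :
    (1 - ε) * (r^2/2) ≤ S ∧ S ≤ (1 + ε) * (r^2/2) := by
  set x := ε/20 with hx
  have hx0 : 0 < x := by positivity
  have hx1 : x ≤ 1/20 := by rw [hx]; linarith
  have hq0 : 0 < r + p := by linarith
  have habs := abs_lt.mp hdev
  have hub : m ≤ (1+x)*(r+p) := by nlinarith [habs.2]
  have hlb : (1-x)*(r+p) ≤ m := by nlinarith [habs.1]
  have h1r : 1 ≤ x * r := by rw [hx]; linarith
  have h1 : r + p ≤ (1+x)*r := by nlinarith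
  have hm_up : m ≤ (1+x)^2 * r := by nlinarith
  have hm2_up : m^2 ≤ ((1+x)^2 * r)^2 := pow_le_pow_left₀ hm0 hm_up 2
  have hm_lo : (1-x)*r ≤ m := by nlinarith
  have hm2_lo : ((1-x)*r)^2 ≤ m^2 :=
    pow_le_pow_left₀ (by nlinarith) hm_lo 2
  have hrr : r ≤ x * r^2 := by nlinarith
  have hsum_up : m^2 + m ≤ ((1+x)^4 + (1+x)^2*x) * r^2 := by
    have e1 : ((1+x)^2 * r)^2 = (1+x)^4 * r^2 := by ring
    have e2 : m ≤ (1+x)^2 * (x*r^2) := by nlinarith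
    nlinarith
  have hx2 : x^2 ≤ x/20 := by nlinarith
  have hx3 : x^3 ≤ x/400 := by nlinarith
  have hx4 : x^4 ≤ x/8000 := by nlinarith [sq_nonneg x, pow_pos hx0 3]
  have hcoef : (1+x)^4 + (1+x)^2*x ≤ 1 + 20*x := by nlinarith [hx2, hx3, hx4]
  have hcoef2 : 1 - 20*x ≤ (1-x)^2 - 2*x := by nlinarith
  constructor
  · have : ((1-x)^2 - 2*x) * r^2 ≤ m^2 - 2*c := by nlinarith
    nlinarith [mul_le_mul_of_nonneg_right hcoef2 (sq_nonneg r)]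
  · nlinarith [mul_le_mul_of_nonneg_right hcoef (sq_nonneg r)]

set_option maxHeartbeats 1000000 in
lemma real_D_bounds {ε p r m D c : ℝ} (hε0 : 0 < ε) (hε1 : ε ≤ 1) (hp0 : 0 < p) (hp1 : p < 1)
    (hr : 20 ≤ ε * r) (hr0 : 0 < r) (hm0 : 0 ≤ m) (hD0 : 0 ≤ D)
    (hdev : |m - (r + p)| < (ε/20) * (r + p))
    (hc : c < (ε/20) * r^2) (hc0 : 0 ≤ c)
    (hup : D + m ≤ m^2 + 1) (hlo : m^2 + 1 ≤ D + m + 2*c) :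
    (1 - ε) * r^2 ≤ D ∧ D ≤ (1 + ε) * r^2 := by
  set x := ε/20 with hx
  have hx0 : 0 < x := by positivity
  have hx1 : x ≤ 1/20 := by rw [hx]; linarith
  have hq0 : 0 < r + p := by linarith
  have habs := abs_lt.mp hdev
  have hub : m ≤ (1+x)*(r+p) := by nlinarith [habs.2]
  have hlb : (1-x)*(r+p) ≤ m := by nlinarith [habs.1]
  have h1r : 1 ≤ x * r := by rw [hx]; linarith
  have h1 : r + p ≤ (1+x)*r := by nlinarith
  have hm_up : m ≤ (1+x)^2 * r := by nlinarith
  have hm2_up : m^2 ≤ ((1+x)^2 * r)^2 := pow_le_pow_left₀ hm0 hm_up 2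
  have hm_lo : (1-x)*r ≤ m := by nlinarith
  have hm2_lo : ((1-x)*r)^2 ≤ m^2 :=
    pow_le_pow_left₀ (by nlinarith) hm_lo 2
  have hrr : r ≤ x * r^2 := by nlinarith
  have hmrr : m ≤ (1+x)^2 * (x*r^2) := by nlinarith
  have hx2 : x^2 ≤ x/20 := by nlinarith
  have hx3 : x^3 ≤ x/400 := by nlinarith
  have hx4 : x^4 ≤ x/8000 := by nlinarith [sq_nonneg x, pow_pos hx0 3]
  have hcoef : (1+x)^4 + x ≤ 1 + 20*x := by nlinarith [hx2, hx3, hx4]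
  have hcoef2 : 1 - 20*x ≤ (1-x)^2 - 2*x - 2*(1+x)^2*x := by nlinarith
  constructor
  · have e1 : ((1-x)*r)^2 = (1-x)^2 * r^2 := by ring
    have : ((1-x)^2 - 2*x - 2*(1+x)^2*x) * r^2 ≤ D := by nlinarith
    nlinarith [mul_le_mul_of_nonneg_right hcoef2 (sq_nonneg r)]
  · have e1 : ((1+x)^2 * r)^2 = (1+x)^4 * r^2 := by ring
    have h1xr : 1 ≤ x * r^2 := by nlinarith
    nlinarith [mul_le_mul_of_nonneg_right hcoef (sq_nonneg r)]

end HMaux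


set_option maxHeartbeats 1000000 in
theorem fast_decay_two_summands' (p : ℕ → ℝ) (hp : ∀ N, p N ∈ Set.Ioo (0 : ℝ) 1)
    (hp1 : (fun N : ℕ => (N : ℝ)⁻¹) =o[atTop] fun N => p N)
    (hp2 : (fun N : ℕ => p N) =o[atTop] fun N : ℕ => (N : ℝ) ^ (-(1/2 : ℝ))) :
    BinomialTilde p (fun _ A => ((A + A).card : ℝ))
        (fun N => ((N : ℝ) * p N) ^ 2 / 2) := by
  have hNp := tendsto_Np p hp hp1
  have hpz := tendsto_p_zero p hp2
  have hNp2 := tendsto_Np2 p hp hp2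
  intro ε₁ ε₂ hε₁ hε₂
  set ε := min ε₁ 1 with hεdef
  have hε0 : 0 < ε := lt_min hε₁ one_pos
  have hεle1 : ε ≤ 1 := min_le_right _ _
  have hεleε₁ : ε ≤ ε₁ := min_le_left _ _
  have ev1 : ∀ᶠ N : ℕ in atTop, 2/((ε/20)^2*ε₂) < ((N:ℝ)+1)*(p N) := by
    filter_upwards [tendsto_atTop.mp hNp (2/((ε/20)^2*ε₂) + 1)] with N hN
    have h := (hp N).1
    nlinarith
  have ev2 : ∀ᶠ N : ℕ in atTop, p N < (ε/20)*ε₂/32 :=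
    hpz.eventually_lt_const (by positivity)
  have ev3 : ∀ᶠ N : ℕ in atTop, (N:ℝ)*(p N)^2 < (ε/20)*ε₂/32 :=
    hNp2.eventually_lt_const (by positivity)
  have ev4 : ∀ᶠ N : ℕ in atTop, 20 ≤ ε * ((N:ℝ)*p N) := by
    filter_upwards [tendsto_atTop.mp hNp (20/ε)] with N hN
    rw [div_le_iff₀ hε0] at hN
    linarith [hN]
  have ev5 : ∀ᶠ N : ℕ in atTop, 1 ≤ N := eventually_ge_atTop 1
  obtain ⟨N₀, hN₀⟩ := eventually_atTop.mp ((((ev1.and ev2).and (ev3.and ev4)).and ev5))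
  refine ⟨N₀, fun N hN => ?_⟩
  obtain ⟨⟨⟨hq_big, hp_small⟩, hNp2_small, hεr⟩, hN1⟩ := hN₀ N hN.le
  have hp0 := (hp N).1
  have hp1N := (hp N).2
  have hN0 : (0:ℝ) < N := by exact_mod_cast hN1
  have hr0 : 0 < (N:ℝ)*p N := mul_pos hN0 hp0
  have hq0 : 0 < ((N:ℝ)+1)*p N := by nlinarith
  have himp : ∀ A ∈ (range (N+1)).powerset,
      (¬ ((1 - ε₁) * (((N:ℝ) * p N)^2/2) ≤ ((A + A).card : ℝ) ∧
          ((A + A).card : ℝ) ≤ (1 + ε₁) * (((N:ℝ) * p N)^2/2))) →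
      ((ε/20)*(((N:ℝ)+1)*p N) ≤ |(A.card:ℝ) - ((N:ℝ)+1)*p N| ∨
        (ε/20)*((N:ℝ)*p N)^2 ≤ (CS N A : ℝ)) := by
    intro A hA hbad
    by_contra hcon
    push_neg at hcon
    obtain ⟨hdev, hcs⟩ := hcon
    apply hbad
    have hsub := mem_powerset.mp hA
    have hupN := sumset_upper A
    have hloN := sumset_lower hsub
    have hdev' : |(A.card:ℝ) - ((N:ℝ)*p N + p N)| < (ε/20)*((N:ℝ)*p N + p N) := by
      have he : ((N:ℝ)+1)*p N = (N:ℝ)*p N + p N := by ring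
      rwa [he] at hdev
    have hres := real_S_bounds hε0 hεle1 hp0 hp1N hεr hr0
      (by positivity : (0:ℝ) ≤ (A.card:ℝ)) (by positivity : (0:ℝ) ≤ ((A+A).card:ℝ))
      hdev' hcs (by positivity)
      (by rw [pow_two]; exact_mod_cast hupN)
      (by rw [pow_two]; exact_mod_cast hloN)
    have hf0 : (0:ℝ) ≤ ((N:ℝ)*p N)^2/2 := by positivity
    constructor
    · nlinarith [hres.1]
    · nlinarith [hres.2]
  have hP1 : binomialProb N (p N)
      (fun A => (ε/20)*(((N:ℝ)+1)*p N) ≤ |(A.card:ℝ) - ((N:ℝ)+1)*p N|) < ε₂/2 := by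
    have hdp := prob_card_dev (N := N) (p := p N) hp0 hp1N
      (t := (ε/20)*(((N:ℝ)+1)*p N)) (by positivity)
    refine lt_of_le_of_lt hdp ?_
    have heq : (((N:ℝ)+1)*p N)/(((ε/20)*(((N:ℝ)+1)*p N))^2)
        = 1/((ε/20)^2*(((N:ℝ)+1)*p N)) := by
      field_simp
    rw [heq, div_lt_iff₀ (by positivity)]
    rw [div_lt_iff₀ (by positivity)] at hq_big
    nlinarith
  have hP2 : binomialProb N (p N)
      (fun A => (ε/20)*((N:ℝ)*p N)^2 ≤ (CS N A : ℝ)) < ε₂/2 := by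
    rw [binomialProb_eq_exp]
    have hmark := exp_markov (s := range (N+1)) (p := p N) hp0.le hp1N.le
      (fun A => (CS N A : ℝ)) (fun A _ => by positivity)
      (t := (ε/20)*((N:ℝ)*p N)^2) (by positivity)
      (fun A => (ε/20)*((N:ℝ)*p N)^2 ≤ (CS N A : ℝ)) (fun A _ h => h)
    refine lt_of_le_of_lt hmark ?_
    have hexp := exp_CS (N := N) (p := p N) hp0.le hp1N.le
    have hstep : Exp (range (N+1)) (p N) (fun A => (CS N A : ℝ)) / ((ε/20)*((N:ℝ)*p N)^2)
        ≤ (2*((N:ℝ)+1)^2 * (p N)^3 + ((N:ℝ)+1)^3 * (p N)^4) / ((ε/20)*((N:ℝ)*p N)^2) := by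
      gcongr
    refine lt_of_le_of_lt hstep ?_
    rw [div_lt_iff₀ (by positivity)]
    have hN1R : (1:ℝ) ≤ (N:ℝ) := by exact_mod_cast hN1
    have h2N : (N:ℝ)+1 ≤ 2*N := by linarith
    have e2 : ((N:ℝ)+1)^2 ≤ 4*(N:ℝ)^2 := by nlinarith
    have e3 : ((N:ℝ)+1)^3 ≤ 8*(N:ℝ)^3 := by nlinarith
    have b1 : 2*((N:ℝ)+1)^2*(p N)^3 ≤ 8*((N:ℝ)*p N)^2*(p N) := by nlinarith [pow_pos hp0 3]
    have b2 : ((N:ℝ)+1)^3*(p N)^4 ≤ 8*((N:ℝ)*(p N)^2)*((N:ℝ)*p N)^2 := by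
      nlinarith [pow_pos hp0 4]
    have c1 : 8*((N:ℝ)*p N)^2*(p N) < 8*((N:ℝ)*p N)^2*((ε/20)*ε₂/32) := by
      apply mul_lt_mul_of_pos_left hp_small (by positivity)
    have c2 : 8*((N:ℝ)*(p N)^2)*((N:ℝ)*p N)^2 < 8*((ε/20)*ε₂/32)*((N:ℝ)*p N)^2 := by
      apply mul_lt_mul_of_pos_right (by linarith [hNp2_small]) (by positivity)
    nlinarith [sq_nonneg ((N:ℝ)*p N)]
  refine lt_of_le_of_lt (le_trans (binomialProb_mono hp0.le hp1N.le himp)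
    (binomialProb_union hp0.le hp1N.le _ _)) (by linarith)

set_option maxHeartbeats 1000000 in
theorem fast_decay_D (p : ℕ → ℝ) (hp : ∀ N, p N ∈ Set.Ioo (0 : ℝ) 1)
    (hp1 : (fun N : ℕ => (N : ℝ)⁻¹) =o[atTop] fun N => p N)
    (hp2 : (fun N : ℕ => p N) =o[atTop] fun N : ℕ => (N : ℝ) ^ (-(1/2 : ℝ))) :
    BinomialTilde p
      (fun _ A => (((A.image fun m : ℕ => (m : ℤ)) - (A.image fun m : ℕ => (m : ℤ))).card : ℝ))
      (fun N => ((N : ℝ) * p N) ^ 2) := by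
  have hNp := tendsto_Np p hp hp1
  have hpz := tendsto_p_zero p hp2
  have hNp2 := tendsto_Np2 p hp hp2
  intro ε₁ ε₂ hε₁ hε₂
  set ε := min ε₁ 1 with hεdef
  have hε0 : 0 < ε := lt_min hε₁ one_pos
  have hεle1 : ε ≤ 1 := min_le_right _ _
  have hεleε₁ : ε ≤ ε₁ := min_le_left _ _
  have ev1 : ∀ᶠ N : ℕ in atTop, 2/((ε/20)^2*ε₂) < ((N:ℝ)+1)*(p N) := by
    filter_upwards [tendsto_atTop.mp hNp (2/((ε/20)^2*ε₂) + 1)] with N hN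
    have h := (hp N).1
    nlinarith
  have ev2 : ∀ᶠ N : ℕ in atTop, p N < (ε/20)*ε₂/32 :=
    hpz.eventually_lt_const (by positivity)
  have ev3 : ∀ᶠ N : ℕ in atTop, (N:ℝ)*(p N)^2 < (ε/20)*ε₂/32 :=
    hNp2.eventually_lt_const (by positivity)
  have ev4 : ∀ᶠ N : ℕ in atTop, 20 ≤ ε * ((N:ℝ)*p N) := by
    filter_upwards [tendsto_atTop.mp hNp (20/ε)] with N hN
    rw [div_le_iff₀ hε0] at hN
    linarith [hN]
  have ev5 : ∀ᶠ N : ℕ in atTop, 1 ≤ N := eventually_ge_atTop 1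
  obtain ⟨N₀, hN₀⟩ := eventually_atTop.mp ((((ev1.and ev2).and (ev3.and ev4)).and ev5))
  refine ⟨N₀, fun N hN => ?_⟩
  obtain ⟨⟨⟨hq_big, hp_small⟩, hNp2_small, hεr⟩, hN1⟩ := hN₀ N hN.le
  have hp0 := (hp N).1
  have hp1N := (hp N).2
  have hN0 : (0:ℝ) < N := by exact_mod_cast hN1
  have hr0 : 0 < (N:ℝ)*p N := mul_pos hN0 hp0
  have hq0 : 0 < ((N:ℝ)+1)*p N := by nlinarith
  have himp : ∀ A ∈ (range (N+1)).powerset,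
      (¬ ((1 - ε₁) * ((N:ℝ) * p N)^2 ≤
            (((A.image fun m : ℕ => (m : ℤ)) - (A.image fun m : ℕ => (m : ℤ))).card : ℝ) ∧
          (((A.image fun m : ℕ => (m : ℤ)) - (A.image fun m : ℕ => (m : ℤ))).card : ℝ)
            ≤ (1 + ε₁) * ((N:ℝ) * p N)^2)) →
      ((ε/20)*(((N:ℝ)+1)*p N) ≤ |(A.card:ℝ) - ((N:ℝ)+1)*p N| ∨
        (ε/20)*((N:ℝ)*p N)^2 ≤ (CD N A : ℝ)) := by
    intro A hA hbad
    by_contra hcon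
    push_neg at hcon
    obtain ⟨hdev, hcd⟩ := hcon
    apply hbad
    have hsub := mem_powerset.mp hA
    have hdev' : |(A.card:ℝ) - ((N:ℝ)*p N + p N)| < (ε/20)*((N:ℝ)*p N + p N) := by
      have he : ((N:ℝ)+1)*p N = (N:ℝ)*p N + p N := by ring
      rwa [he] at hdev
    have hmpos : 0 < A.card := by
      have habs := abs_lt.mp hdev'
      have : (0:ℝ) < (A.card:ℝ) := by nlinarith [habs.1]
      exact_mod_cast this
    have hne : A.Nonempty := Finset.card_pos.mp hmpos
    have hupN := diffset_upper A
    have hloN := diffset_lower hsub hne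
    have hres := real_D_bounds hε0 hεle1 hp0 hp1N hεr hr0
      (by positivity : (0:ℝ) ≤ (A.card:ℝ))
      (by positivity : (0:ℝ) ≤
        (((A.image fun m : ℕ => (m : ℤ)) - (A.image fun m : ℕ => (m : ℤ))).card : ℝ))
      hdev' hcd (by positivity)
      (by rw [pow_two]; exact_mod_cast hupN)
      (by rw [pow_two]; exact_mod_cast hloN)
    have hf0 : (0:ℝ) ≤ ((N:ℝ)*p N)^2 := by positivity
    constructor
    · nlinarith [hres.1]
    · nlinarith [hres.2]
  have hP1 : binomialProb N (p N)
      (fun A => (ε/20)*(((N:ℝ)+1)*p N) ≤ |(A.card:ℝ) - ((N:ℝ)+1)*p N|) < ε₂/2 := by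
    have hdp := prob_card_dev (N := N) (p := p N) hp0 hp1N
      (t := (ε/20)*(((N:ℝ)+1)*p N)) (by positivity)
    refine lt_of_le_of_lt hdp ?_
    have heq : (((N:ℝ)+1)*p N)/(((ε/20)*(((N:ℝ)+1)*p N))^2)
        = 1/((ε/20)^2*(((N:ℝ)+1)*p N)) := by
      field_simp
    rw [heq, div_lt_iff₀ (by positivity)]
    rw [div_lt_iff₀ (by positivity)] at hq_big
    nlinarith
  have hP2 : binomialProb N (p N)
      (fun A => (ε/20)*((N:ℝ)*p N)^2 ≤ (CD N A : ℝ)) < ε₂/2 := by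
    rw [binomialProb_eq_exp]
    have hmark := exp_markov (s := range (N+1)) (p := p N) hp0.le hp1N.le
      (fun A => (CD N A : ℝ)) (fun A _ => by positivity)
      (t := (ε/20)*((N:ℝ)*p N)^2) (by positivity)
      (fun A => (ε/20)*((N:ℝ)*p N)^2 ≤ (CD N A : ℝ)) (fun A _ h => h)
    refine lt_of_le_of_lt hmark ?_
    have hexp := exp_CD (N := N) (p := p N) hp0.le hp1N.le
    have hstep : Exp (range (N+1)) (p N) (fun A => (CD N A : ℝ)) / ((ε/20)*((N:ℝ)*p N)^2)
        ≤ (2*((N:ℝ)+1)^2 * (p N)^3 + ((N:ℝ)+1)^3 * (p N)^4) / ((ε/20)*((N:ℝ)*p N)^2) := by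
      gcongr
    refine lt_of_le_of_lt hstep ?_
    rw [div_lt_iff₀ (by positivity)]
    have hN1R : (1:ℝ) ≤ (N:ℝ) := by exact_mod_cast hN1
    have h2N : (N:ℝ)+1 ≤ 2*N := by linarith
    have e2 : ((N:ℝ)+1)^2 ≤ 4*(N:ℝ)^2 := by nlinarith
    have e3 : ((N:ℝ)+1)^3 ≤ 8*(N:ℝ)^3 := by nlinarith
    have b1 : 2*((N:ℝ)+1)^2*(p N)^3 ≤ 8*((N:ℝ)*p N)^2*(p N) := by nlinarith [pow_pos hp0 3]
    have b2 : ((N:ℝ)+1)^3*(p N)^4 ≤ 8*((N:ℝ)*(p N)^2)*((N:ℝ)*p N)^2 := by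
      nlinarith [pow_pos hp0 4]
    have c1 : 8*((N:ℝ)*p N)^2*(p N) < 8*((N:ℝ)*p N)^2*((ε/20)*ε₂/32) := by
      apply mul_lt_mul_of_pos_left hp_small (by positivity)
    have c2 : 8*((N:ℝ)*(p N)^2)*((N:ℝ)*p N)^2 < 8*((ε/20)*ε₂/32)*((N:ℝ)*p N)^2 := by
      apply mul_lt_mul_of_pos_right (by linarith [hNp2_small]) (by positivity)
    nlinarith [sq_nonneg ((N:ℝ)*p N)]
  refine lt_of_le_of_lt (le_trans (binomialProb_mono hp0.le hp1N.le himp)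
    (binomialProb_union hp0.le hp1N.le _ _)) (by linarith)

theorem fast_decay_two_summands (p : ℕ → ℝ) (hp : ∀ N, p N ∈ Set.Ioo (0 : ℝ) 1)
    (hp1 : (fun N : ℕ => (N : ℝ)⁻¹) =o[atTop] fun N => p N)
    (hp2 : (fun N : ℕ => p N) =o[atTop] fun N : ℕ => (N : ℝ) ^ (-(1/2 : ℝ))) :
    BinomialTilde p (fun _ A => ((A + A).card : ℝ))
        (fun N => ((N : ℝ) * p N) ^ 2 / 2) ∧
      BinomialTilde p
        (fun _ A => (((A.image fun m : ℕ => (m : ℤ)) - (A.image fun m : ℕ => (m : ℤ))).card : ℝ))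
        (fun N => ((N : ℝ) * p N) ^ 2) := by
  exact ⟨fast_decay_two_summands' p hp hp1 hp2, fast_decay_D p hp hp1 hp2⟩
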